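/- Let H_γ be an infinitesimal Cherednik algebra over a field k of characteristic p > 0, for a reductive g ⊆ gl_n acting on V = k^n ⊕ (k^n)*. Then for every v ∈ k^n, the element v^{p^2} is central in H_γ; similarly w^{p^2} is central for every w ∈ (k^n)*. -/

import Mathlib

set_option maxHeartbeats 1000000

section Aux

variable {k : Type} [Field k] {A : Type} [Ring A] [Algebra k A]

lemma aux_L1 (x y : A) (hc : x * (x * y - y * x) = (x * y - y * x) * x) :
    ∀ m : ℕ, x ^ (m + 1) * y - y * x ^ (m + 1) = (m + 1) • (x ^ m * (x * y - y * x)) := by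
  intro m
  induction m with
  | zero => simp
  | succ m ih =>
    have hcomm : Commute x (x * y - y * x) := hc
    have hpow : (x * y - y * x) * x ^ (m + 1) = x ^ (m + 1) * (x * y - y * x) :=
      (hcomm.pow_left (m + 1)).symm.eq
    have key : x ^ (m + 1 + 1) * y - y * x ^ (m + 1 + 1)
        = x * (x ^ (m + 1) * y - y * x ^ (m + 1)) + (x * y - y * x) * x ^ (m + 1) := by
      rw [pow_succ' x (m + 1)]
      noncomm_ring
    rw [key, ih, hpow, mul_smul_comm, ← mul_assoc, ← pow_succ' x m]
    exact (succ_nsmul (x ^ (m + 1) * (x * y - y * x)) (m + 1)).symm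

lemma aux_L2 (B : Subalgebra k A) (x y : A) (hx : x ∈ B) (hz : x * y - y * x ∈ B) :
    ∀ m : ℕ, x ^ m * y - y * x ^ m ∈ B := by
  intro m
  induction m with
  | zero => simpa using zero_mem B
  | succ m ih =>
    have key : x ^ (m + 1) * y - y * x ^ (m + 1)
        = x * (x ^ m * y - y * x ^ m) + (x * y - y * x) * x ^ m := by
      rw [pow_succ' x m]
      noncomm_ring
    rw [key]
    exact add_mem (mul_mem hx ih) (mul_mem hz (pow_mem hx m))

lemma aux_key (p : ℕ) [Fact p.Prime] [CharP k p] (x : A) (S T : Set A)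
    (hgen : Algebra.adjoin k (S ∪ T) = ⊤)
    (hxS : x ∈ Algebra.adjoin k S)
    (h1 : ∀ y ∈ S, x * (x * y - y * x) = (x * y - y * x) * x)
    (h3 : ∀ y ∈ T, x * y - y * x ∈ Algebra.adjoin k S) :
    x ^ (p ^ 2) ∈ Subalgebra.center k A := by
  have hp : 0 < p := (Fact.out : p.Prime).pos
  have hpA : ∀ a : A, p • a = 0 := by
    intro a
    have h0 : ((p : ℕ) : A) = 0 := by
      rw [← map_natCast (algebraMap k A) p, CharP.cast_eq_zero k p, map_zero]
    rw [nsmul_eq_mul, h0, zero_mul]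
  -- x^p commutes with S
  have step2 : ∀ y ∈ S, x ^ p * y = y * x ^ p := by
    intro y hy
    have h := aux_L1 x y (h1 y hy) (p - 1)
    rw [Nat.sub_add_cancel hp] at h
    rw [hpA] at h
    exact sub_eq_zero.mp h
  -- x^p commutes with everything in adjoin S
  have step3 : ∀ b ∈ Algebra.adjoin k S, x ^ p * b = b * x ^ p := by
    have hBC : Algebra.adjoin k S ≤ Subalgebra.centralizer k {x ^ p} := by
      apply Algebra.adjoin_le
      intro y hy
      rw [SetLike.mem_coe, Subalgebra.mem_centralizer_iff]
      intro g hg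
      rw [Set.mem_singleton_iff] at hg
      rw [hg]
      exact step2 y hy
    intro b hb
    have := hBC hb
    rw [Subalgebra.mem_centralizer_iff] at this
    exact this (x ^ p) rfl
  -- commutator of x^p with T lands in adjoin S
  have step4 : ∀ y ∈ T, x ^ p * y - y * x ^ p ∈ Algebra.adjoin k S :=
    fun y hy => aux_L2 _ x y hxS (h3 y hy) p
  -- x^(p^2) commutes with T
  have hpp : x ^ (p ^ 2) = (x ^ p) ^ p := by rw [← pow_mul, pow_two]
  have step5 : ∀ y ∈ T, x ^ (p ^ 2) * y = y * x ^ (p ^ 2) := by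
    intro y hy
    have hcomm : x ^ p * (x ^ p * y - y * x ^ p) = (x ^ p * y - y * x ^ p) * x ^ p :=
      step3 _ (step4 y hy)
    have h := aux_L1 (x ^ p) y hcomm (p - 1)
    rw [Nat.sub_add_cancel hp] at h
    rw [hpA] at h
    rw [hpp]
    exact sub_eq_zero.mp h
  -- conclude
  rw [Subalgebra.mem_center_iff]
  intro b
  have hbmem : b ∈ Subalgebra.centralizer k {x ^ (p ^ 2)} := by
    have hle : Algebra.adjoin k (S ∪ T) ≤ Subalgebra.centralizer k {x ^ (p ^ 2)} := by
      apply Algebra.adjoin_le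
      intro y hy
      rw [SetLike.mem_coe, Subalgebra.mem_centralizer_iff]
      intro g hg
      rw [Set.mem_singleton_iff] at hg
      rw [hg]
      rcases hy with hy | hy
      · have hcomm : Commute (x ^ p) y := step2 y hy
        have := (hcomm.pow_left p).eq
        rw [hpp]
        exact this
      · exact step5 y hy
    have : b ∈ Algebra.adjoin k (S ∪ T) := by rw [hgen]; exact Algebra.mem_top
    exact hle this
  rw [Subalgebra.mem_centralizer_iff] at hbmem
  exact (hbmem (x ^ (p ^ 2)) rfl).symm

end Aux

attribute [local instance 100] LieRing.ofAssociativeRing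

open Matrix in
theorem stmt17 {k : Type} [Field k] (p : ℕ) [Fact p.Prime] [CharP k p]
    {n : ℕ} (g : LieSubalgebra k (Matrix (Fin n) (Fin n) k))
    (hred : LieAlgebra.radical k g = LieAlgebra.center k g)
    (hrestr : ∀ a : Matrix (Fin n) (Fin n) k, a ∈ g → a ^ p ∈ g)
    {A : Type} [Ring A] [Algebra k A]
    (ι : g →ₗ[k] A) (jv jw : (Fin n → k) →ₗ[k] A)
    (hι : ∀ a b : g, ι ⁅a, b⁆ = ⁅ι a, ι b⁆)
    (hav : ∀ (a : g) (v : Fin n → k),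
      ⁅ι a, jv v⁆ = jv ((a : Matrix (Fin n) (Fin n) k) *ᵥ v))
    (haw : ∀ (a : g) (w : Fin n → k),
      ⁅ι a, jw w⁆ = -jw ((a : Matrix (Fin n) (Fin n) k)ᵀ *ᵥ w))
    (hvv : ∀ v v', ⁅jv v, jv v'⁆ = 0)
    (hww : ∀ w w', ⁅jw w, jw w'⁆ = 0)
    (γ : (Fin n → k) →ₗ[k] (Fin n → k) →ₗ[k] A)
    (hγ : ∀ v w, γ v w ∈ Algebra.adjoin k (Set.range ι))
    (hinv : ∀ (a : g) (v w : Fin n → k),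
      ⁅ι a, γ v w⁆ = γ ((a : Matrix (Fin n) (Fin n) k) *ᵥ v) w -
        γ v ((a : Matrix (Fin n) (Fin n) k)ᵀ *ᵥ w))
    (hvw : ∀ v w, ⁅jv v, jw w⁆ = γ v w)
    (hgen : Algebra.adjoin k (Set.range ι ∪ Set.range jv ∪ Set.range jw) = ⊤) :
    (∀ v : Fin n → k, (jv v) ^ (p^2) ∈ Subalgebra.center k A) ∧
    (∀ w : Fin n → k, (jw w) ^ (p^2) ∈ Subalgebra.center k A) := by
  constructor
  · intro v
    apply aux_key p (jv v) (Set.range ι ∪ Set.range jv) (Set.range jw)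
    · exact hgen
    · exact Algebra.subset_adjoin (Or.inr ⟨v, rfl⟩)
    · rintro y (⟨a, rfl⟩ | ⟨v', rfl⟩)
      · have h1 : ι a * jv v - jv v * ι a = jv ((a : Matrix (Fin n) (Fin n) k) *ᵥ v) := by
          rw [← Ring.lie_def]; exact hav a v
        have h2 : jv v * ι a - ι a * jv v = -jv ((a : Matrix (Fin n) (Fin n) k) *ᵥ v) := by
          rw [← neg_sub, h1]
        rw [h2]
        have h3 : jv v * jv ((a : Matrix (Fin n) (Fin n) k) *ᵥ v)
            = jv ((a : Matrix (Fin n) (Fin n) k) *ᵥ v) * jv v := by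
          have := hvv v ((a : Matrix (Fin n) (Fin n) k) *ᵥ v)
          rw [Ring.lie_def, sub_eq_zero] at this
          exact this
        rw [mul_neg, neg_mul, h3]
      · have h3 : jv v * jv v' = jv v' * jv v := by
          have := hvv v v'
          rw [Ring.lie_def, sub_eq_zero] at this
          exact this
        rw [h3, sub_self, mul_zero, zero_mul]
    · rintro y ⟨w, rfl⟩
      have h1 : jv v * jw w - jw w * jv v = γ v w := by
        rw [← Ring.lie_def]; exact hvw v w
      rw [h1]
      exact Algebra.adjoin_mono Set.subset_union_left (hγ v w)
  · intro w
    apply aux_key p (jw w) (Set.range ι ∪ Set.range jw) (Set.range jv)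
    · rw [Set.union_right_comm] at hgen
      exact hgen
    · exact Algebra.subset_adjoin (Or.inr ⟨w, rfl⟩)
    · rintro y (⟨a, rfl⟩ | ⟨w', rfl⟩)
      · have h1 : ι a * jw w - jw w * ι a
            = -jw ((a : Matrix (Fin n) (Fin n) k)ᵀ *ᵥ w) := by
          rw [← Ring.lie_def]; exact haw a w
        have h2 : jw w * ι a - ι a * jw w = jw ((a : Matrix (Fin n) (Fin n) k)ᵀ *ᵥ w) := by
          rw [← neg_sub, h1, neg_neg]
        rw [h2]
        have := hww w ((a : Matrix (Fin n) (Fin n) k)ᵀ *ᵥ w)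
        rw [Ring.lie_def, sub_eq_zero] at this
        exact this
      · have h3 : jw w * jw w' = jw w' * jw w := by
          have := hww w w'
          rw [Ring.lie_def, sub_eq_zero] at this
          exact this
        rw [h3, sub_self, mul_zero, zero_mul]
    · rintro y ⟨v, rfl⟩
      have h1 : jw w * jv v - jv v * jw w = -γ v w := by
        rw [← neg_sub, ← Ring.lie_def, hvw]
      rw [h1]
      exact neg_mem (Algebra.adjoin_mono Set.subset_union_left (hγ v w))
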